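/- Let G = (α,β) be a maximum three-species zero-one network whose stoichiometric matrix N has rank 2, and suppose the rows N_2, N_3 of N are linearly independent, so that N_1 = a·N_2 + b·N_3 for unique reals a, b. Then there exist a permutation σ of {1,2,3} and reals ā, b̄ such that N_{σ(1)} = ā·N_{σ(2)} + b̄·N_{σ(3)} and (|ā|, |b̄|) ∈ {(1,0), (0,1), (0,0), (1/2,1/2), (1,1)}. -/

import Mathlib

noncomputable section

/-- The stoichiometric matrix `N = β − α` of a reaction network, as a real matrix. -/
def stoich {s m : ℕ} (α β : Matrix (Fin s) (Fin m) ℕ) : Matrix (Fin s) (Fin m) ℝ :=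
  fun i j => (β i j : ℝ) - (α i j : ℝ)

/-- A three-species zero-one network is maximum if every zero-one reaction on its species whose
stoichiometric vector lies in the column space of the stoichiometric matrix already occurs among
its reactions. -/
def IsMaximum {m : ℕ} (α β : Matrix (Fin 3) (Fin m) ℕ) : Prop :=
  ∀ a' b' : Fin 3 → ℕ, (∀ i, a' i ≤ 1) → (∀ i, b' i ≤ 1) → a' ≠ b' →
    (fun i => (b' i : ℝ) - (a' i : ℝ)) ∈
      Submodule.span ℝ (Set.range fun j i => stoich α β i j) →
    ∃ j, (∀ i, α i j = a' i) ∧ (∀ i, β i j = b' i)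

set_option maxHeartbeats 4000000 in
lemma key729 (u0 u1 u2 v0 v1 v2 a b : ℝ)
    (hu0 : u0 = -1 ∨ u0 = 0 ∨ u0 = 1) (hu1 : u1 = -1 ∨ u1 = 0 ∨ u1 = 1)
    (hu2 : u2 = -1 ∨ u2 = 0 ∨ u2 = 1) (hv0 : v0 = -1 ∨ v0 = 0 ∨ v0 = 1)
    (hv1 : v1 = -1 ∨ v1 = 0 ∨ v1 = 1) (hv2 : v2 = -1 ∨ v2 = 0 ∨ v2 = 1)
    (hd : u1 * v2 - u2 * v1 ≠ 0)
    (h1 : u0 = a * u1 + b * u2) (h2 : v0 = a * v1 + b * v2) :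
    (|a| = 1 ∧ |b| = 0) ∨ (|a| = 0 ∧ |b| = 1) ∨ (|a| = 0 ∧ |b| = 0) ∨
    (|a| = 1/2 ∧ |b| = 1/2) ∨ (|a| = 1 ∧ |b| = 1) ∨
    (|a| = 2 ∧ |b| = 1) ∨ (|a| = 1 ∧ |b| = 2) := by
  have ha : a = (u0 * v2 - v0 * u2) / (u1 * v2 - u2 * v1) := by
    rw [eq_div_iff hd]; linear_combination u2 * h2 - v2 * h1
  have hb : b = (v0 * u1 - u0 * v1) / (u1 * v2 - u2 * v1) := by
    rw [eq_div_iff hd]; linear_combination v1 * h1 - u1 * h2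
  subst ha hb
  clear h1 h2
  rcases hu0 with rfl|rfl|rfl <;> rcases hu1 with rfl|rfl|rfl <;>
    rcases hu2 with rfl|rfl|rfl <;> rcases hv0 with rfl|rfl|rfl <;>
    rcases hv1 with rfl|rfl|rfl <;> rcases hv2 with rfl|rfl|rfl <;>
    (revert hd; norm_num [abs_div])


set_option maxHeartbeats 4000000 in
/-- For a maximum three-species zero-one network of rank two with `N_1 = a·N_2 + b·N_3`, after
relabeling the species the conservation-law coefficients satisfy
`(|ā|,|b̄|) ∈ {(1,0),(0,1),(0,0),(1/2,1/2),(1,1)}`. -/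
theorem stmt16 {m : ℕ} (α β : Matrix (Fin 3) (Fin m) ℕ)
    (hnet : ∀ j, ∃ i, α i j ≠ β i j)
    (h01 : ∀ i j, α i j ≤ 1 ∧ β i j ≤ 1)
    (hmax : IsMaximum α β)
    (hrank : (stoich α β).rank = 2)
    (hind : LinearIndependent ℝ ![stoich α β 1, stoich α β 2])
    (a b : ℝ)
    (hab : ∀ j, stoich α β 0 j = a * stoich α β 1 j + b * stoich α β 2 j) :
    ∃ (σ : Equiv.Perm (Fin 3)) (a' b' : ℝ),
      (∀ j, stoich α β (σ 0) j = a' * stoich α β (σ 1) j + b' * stoich α β (σ 2) j) ∧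
      ((|a'| = 1 ∧ |b'| = 0) ∨ (|a'| = 0 ∧ |b'| = 1) ∨ (|a'| = 0 ∧ |b'| = 0) ∨
        (|a'| = 1 / 2 ∧ |b'| = 1 / 2) ∨ (|a'| = 1 ∧ |b'| = 1)) := by
  have hval : ∀ i j, stoich α β i j = -1 ∨ stoich α β i j = 0 ∨ stoich α β i j = 1 := by
    intro i j
    obtain ⟨ha1, hb1⟩ := h01 i j
    unfold stoich
    interval_cases h : α i j <;> interval_cases h2 : β i j <;> norm_num
  -- extract a nonzero 2×2 minor of rows 1,2
  have hpair := linearIndependent_fin2.mp hind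
  simp only [Matrix.cons_val_one, Matrix.head_cons, Matrix.cons_val_zero] at hpair
  obtain ⟨hy, hxy⟩ := hpair
  have hminor : ∃ j k, stoich α β 1 j * stoich α β 2 k - stoich α β 2 j * stoich α β 1 k ≠ 0 := by
    by_contra hcon
    push_neg at hcon
    have hy' : ∃ k, stoich α β 2 k ≠ 0 := by
      by_contra hz
      push_neg at hz
      exact hy (funext fun k => hz k)
    obtain ⟨k0, hk0⟩ := hy'
    apply hxy (stoich α β 1 k0 / stoich α β 2 k0)
    funext j
    have h := hcon j k0
    simp only [Pi.smul_apply, smul_eq_mul]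
    field_simp
    linear_combination -h
  obtain ⟨j₁, j₂, hd⟩ := hminor
  have hd' : stoich α β 1 j₁ * stoich α β 2 j₂ - stoich α β 2 j₁ * stoich α β 1 j₂ ≠ 0 := hd
  have key := key729 (stoich α β 0 j₁) (stoich α β 1 j₁) (stoich α β 2 j₁)
    (stoich α β 0 j₂) (stoich α β 1 j₂) (stoich α β 2 j₂) a b
    (hval 0 j₁) (hval 1 j₁) (hval 2 j₁) (hval 0 j₂) (hval 1 j₂) (hval 2 j₂)
    hd' (hab j₁) (hab j₂)
  rcases key with ⟨h1, h2⟩|⟨h1, h2⟩|⟨h1, h2⟩|⟨h1, h2⟩|⟨h1, h2⟩|⟨h1, h2⟩|⟨h1, h2⟩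
  · exact ⟨Equiv.refl _, a, b, hab, Or.inl ⟨h1, h2⟩⟩
  · exact ⟨Equiv.refl _, a, b, hab, Or.inr (Or.inl ⟨h1, h2⟩)⟩
  · exact ⟨Equiv.refl _, a, b, hab, Or.inr (Or.inr (Or.inl ⟨h1, h2⟩))⟩
  · exact ⟨Equiv.refl _, a, b, hab, Or.inr (Or.inr (Or.inr (Or.inl ⟨h1, h2⟩)))⟩
  · exact ⟨Equiv.refl _, a, b, hab, Or.inr (Or.inr (Or.inr (Or.inr ⟨h1, h2⟩)))⟩
  · -- |a| = 2, |b| = 1 : use σ = swap 0 1, coefficients 1/a, -b/a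
    have ha0 : a ≠ 0 := fun h => by simp [h] at h1
    have e0 : (Equiv.swap (0:Fin 3) 1) 0 = 1 := by decide
    have e1 : (Equiv.swap (0:Fin 3) 1) 1 = 0 := by decide
    have e2 : (Equiv.swap (0:Fin 3) 1) 2 = 2 := by decide
    refine ⟨Equiv.swap 0 1, 1/a, -b/a, ?_, Or.inr (Or.inr (Or.inr (Or.inl ⟨?_, ?_⟩)))⟩
    · intro j
      rw [e0, e1, e2]
      field_simp
      linear_combination -hab j
    · rw [abs_div, abs_one, h1]
    · rw [abs_div, abs_neg, h2, h1]
  · -- |a| = 1, |b| = 2 : use σ = swap 0 2, coefficients -a/b, 1/b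
    have hb0 : b ≠ 0 := fun h => by simp [h] at h2
    have e0 : (Equiv.swap (0:Fin 3) 2) 0 = 2 := by decide
    have e1 : (Equiv.swap (0:Fin 3) 2) 1 = 1 := by decide
    have e2 : (Equiv.swap (0:Fin 3) 2) 2 = 0 := by decide
    refine ⟨Equiv.swap 0 2, -a/b, 1/b, ?_, Or.inr (Or.inr (Or.inr (Or.inl ⟨?_, ?_⟩)))⟩
    · intro j
      rw [e0, e1, e2]
      field_simp
      linear_combination -hab j
    · rw [abs_div, abs_neg, h1, h2]
    · rw [abs_div, abs_one, h2]
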